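/- Let k be a field and R = k[X,Y,Z]/(XY). Then the R-linear map φ : R → R³ defined by φ(r) = (rY, rX, 0) is injective, the R-linear map ψ : R³ → Ω_{R/k} sending the three standard basis vectors to dX, dY, dZ respectively is surjective, and the kernel of ψ equals the image of φ (so 0 → R → R³ → Ω_{R/k} → 0 is exact). In particular, Ω_{R/k} has projective dimension at most 1 as an R-module. -/

import Mathlib

open MvPolynomial

set_option synthInstance.maxHeartbeats 1000000
set_option maxHeartbeats 1000000

noncomputable section

/-- `R = k[X,Y,Z]/(XY)`. -/
abbrev SncLocalRing (k : Type) [Field k] : Type :=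
  MvPolynomial (Fin 3) k ⧸
    (Ideal.span {(X 0 : MvPolynomial (Fin 3) k) * X 1})

variable (k : Type) [Field k]

/-- The class of `X` in `R`. -/
def xR : SncLocalRing k := Ideal.Quotient.mk _ (X 0)

/-- The class of `Y` in `R`. -/
def yR : SncLocalRing k := Ideal.Quotient.mk _ (X 1)

/-- The class of `Z` in `R`. -/
def zR : SncLocalRing k := Ideal.Quotient.mk _ (X 2)

/-- `φ : R → R³`, `r ↦ (rY, rX, 0)`. -/
def phiMap : SncLocalRing k →ₗ[SncLocalRing k] (Fin 3 → SncLocalRing k) :=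
  LinearMap.id.smulRight ![yR k, xR k, 0]

/-- `ψ : R³ → Ω_{R/k}` sending the standard basis vectors to `dX, dY, dZ`. -/
def psiMap : (Fin 3 → SncLocalRing k) →ₗ[SncLocalRing k] Ω[SncLocalRing k⁄k] :=
  ∑ i : Fin 3, (LinearMap.proj i).smulRight
    (KaehlerDifferential.D k (SncLocalRing k) (![xR k, yR k, zR k] i))

namespace SncAux

abbrev S3 := MvPolynomial (Fin 3) k
abbrev I3 : Ideal (S3 k) := Ideal.span {(X 0 : S3 k) * X 1}
abbrev Mq := (Fin 3 → SncLocalRing k) ⧸ LinearMap.range (phiMap k)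

lemma vR_eq (i : Fin 3) : ![xR k, yR k, zR k] i = Ideal.Quotient.mk (I3 k) (X i) := by
  fin_cases i <;> rfl

lemma psi_single (i : Fin 3) :
    psiMap k (Pi.single i 1) = KaehlerDifferential.D k (SncLocalRing k)
      (Ideal.Quotient.mk (I3 k) (X i)) := by
  rw [← vR_eq]
  simp [psiMap, LinearMap.sum_apply, Pi.single_apply, ite_smul, Finset.sum_ite_eq']
  simp only [fun x => zero_smul (SncLocalRing k) (KaehlerDifferential.D k (SncLocalRing k) x),
    Finset.sum_ite_eq', Finset.mem_univ, if_true]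

lemma psi_apply (a : Fin 3 → SncLocalRing k) :
    psiMap k a = ∑ i : Fin 3, a i • KaehlerDifferential.D k (SncLocalRing k)
      (Ideal.Quotient.mk (I3 k) (X i)) := by
  rw [psiMap, LinearMap.sum_apply]
  refine Finset.sum_congr rfl fun i _ => ?_
  rw [LinearMap.smulRight_apply, LinearMap.proj_apply, vR_eq]

lemma mk_XY_eq_zero : Ideal.Quotient.mk (I3 k) (X 0 * X 1) = 0 := by
  rw [Ideal.Quotient.eq_zero_iff_mem]
  exact Ideal.mem_span_singleton_self _

def delta : Derivation k (S3 k) (Mq k) :=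
  MvPolynomial.mkDerivation k (fun i => Submodule.Quotient.mk (Pi.single i 1))

lemma smul_mk_def (f : S3 k) (m : Mq k) : f • m = (Ideal.Quotient.mk (I3 k) f) • m := by
  rw [← algebraMap_smul (SncLocalRing k) f m, Ideal.Quotient.algebraMap_eq]

lemma delta_X (i : Fin 3) : delta k (X i) = Submodule.Quotient.mk (Pi.single i 1) :=
  MvPolynomial.mkDerivation_X _ _ _

lemma delta_XY : delta k (X 0 * X 1) = 0 := by
  rw [Derivation.leibniz, smul_mk_def, smul_mk_def]
  show xR k • _ + yR k • _ = 0
  rw [delta_X, delta_X, ← Submodule.Quotient.mk_smul, ← Submodule.Quotient.mk_smul,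
    ← Submodule.Quotient.mk_add, Submodule.Quotient.mk_eq_zero]
  refine ⟨1, ?_⟩
  show (1 : SncLocalRing k) • ![yR k, xR k, 0] = _
  rw [one_smul]
  funext i
  fin_cases i <;> simp

lemma delta_ker : (Submodule.restrictScalars k (I3 k)) ≤ LinearMap.ker (delta k).toLinearMap := by
  intro m hm
  simp only [Submodule.restrictScalars_mem] at hm
  rw [Ideal.mem_span_singleton] at hm
  obtain ⟨c, rfl⟩ := hm
  simp only [LinearMap.mem_ker]
  show delta k (X 0 * X 1 * c) = 0
  rw [Derivation.leibniz, delta_XY, smul_zero, add_zero, smul_mk_def, mk_XY_eq_zero]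
  exact zero_smul (SncLocalRing k) ((delta k) c)

def dlin : SncLocalRing k →ₗ[k] Mq k :=
  (Submodule.liftQ ((I3 k).restrictScalars k) (delta k).toLinearMap (delta_ker k)).comp
    (Submodule.Quotient.restrictScalarsEquiv k ((I3 k) : Submodule (S3 k) (S3 k))).symm.toLinearMap

lemma dlin_mk (f : S3 k) : dlin k (Ideal.Quotient.mk (I3 k) f) = delta k f := rfl

/-- The derivation `R → R³/im φ` descended from `delta`. -/
def Dq : Derivation k (SncLocalRing k) (Mq k) where
  toLinearMap := dlin k
  map_one_eq_zero' := by
    show dlin k (Ideal.Quotient.mk (I3 k) 1) = 0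
    rw [dlin_mk]
    exact (delta k).map_one_eq_zero
  leibniz' a b := by
    obtain ⟨f, rfl⟩ := Ideal.Quotient.mk_surjective a
    obtain ⟨g, rfl⟩ := Ideal.Quotient.mk_surjective b
    show dlin k (Ideal.Quotient.mk (I3 k) (f * g)) = _
    rw [dlin_mk]
    show delta k (f * g) = _
    rw [Derivation.leibniz, smul_mk_def, smul_mk_def]
    rfl

def Lmap : Ω[SncLocalRing k⁄k] →ₗ[SncLocalRing k] Mq k :=
  (Dq k).liftKaehlerDifferential

lemma Lmap_D (r : SncLocalRing k) :
    Lmap k (KaehlerDifferential.D k (SncLocalRing k) r) = Dq k r :=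
  Derivation.liftKaehlerDifferential_comp_D _ _

lemma Lmap_comp_psi :
    (Lmap k).comp (psiMap k) = (LinearMap.range (phiMap k)).mkQ := by
  refine Module.Basis.ext (Pi.basisFun (SncLocalRing k) (Fin 3)) fun i => ?_
  rw [Pi.basisFun_apply]
  rw [LinearMap.comp_apply, psi_single, Lmap_D]
  show dlin k (Ideal.Quotient.mk (I3 k) (X i)) = _
  rw [dlin_mk, delta_X]
  rfl

lemma prime_X0 : Prime (X 0 : S3 k) := by
  rw [← MulEquiv.prime_iff (MvPolynomial.finSuccEquiv k 2)]
  show Prime ((MvPolynomial.finSuccEquiv k 2) (X 0))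
  rw [MvPolynomial.finSuccEquiv_X_zero]
  exact Polynomial.prime_X

lemma prime_X1 : Prime (X 1 : S3 k) := by
  rw [← MulEquiv.prime_iff (MvPolynomial.renameEquiv k (Equiv.swap (0 : Fin 3) 1))]
  show Prime ((MvPolynomial.renameEquiv k (Equiv.swap (0 : Fin 3) 1)) (X 1))
  rw [MvPolynomial.renameEquiv_apply, MvPolynomial.rename_X, Equiv.swap_apply_right]
  exact prime_X0 k

lemma psi_phi_one : psiMap k (phiMap k 1) = 0 := by
  have h1 : phiMap k 1 = ![yR k, xR k, 0] := by
    rw [phiMap, LinearMap.smulRight_apply, LinearMap.id_apply, one_smul]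
  have hD : yR k • KaehlerDifferential.D k (SncLocalRing k) (Ideal.Quotient.mk (I3 k) (X 0))
      + xR k • KaehlerDifferential.D k (SncLocalRing k) (Ideal.Quotient.mk (I3 k) (X 1))
      = 0 := by
    show yR k • KaehlerDifferential.D k (SncLocalRing k) (xR k)
      + xR k • KaehlerDifferential.D k (SncLocalRing k) (yR k) = 0
    rw [add_comm, ← Derivation.leibniz]
    have hxy : xR k * yR k = 0 := by
      rw [xR, yR, ← map_mul]
      exact mk_XY_eq_zero k
    rw [hxy, Derivation.map_zero]
  rw [h1, psi_apply k, Fin.sum_univ_three, Matrix.cons_val_zero, Matrix.cons_val_one,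
    Matrix.cons_val_zero, Matrix.cons_val_two, Matrix.tail_cons, Matrix.head_cons]
  rw [show ((0 : SncLocalRing k) • KaehlerDifferential.D k (SncLocalRing k)
      (Ideal.Quotient.mk (I3 k) (X 2))) = 0 from zero_smul (SncLocalRing k)
      (KaehlerDifferential.D k (SncLocalRing k) (Ideal.Quotient.mk (I3 k) (X 2))),
    add_zero, hD]

lemma psi_comp_phi : (psiMap k).comp (phiMap k) = 0 := by
  apply LinearMap.ext_ring
  rw [LinearMap.comp_apply, psi_phi_one k, LinearMap.zero_apply]

end SncAux

open SncAux

/-- The sequence `0 → R → R³ → Ω_{R/k} → 0` is exact, exhibiting a length-one free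
resolution of `Ω_{R/k}`; in particular `Ω_{R/k}` has projective dimension at most 1. -/
theorem kaehler_resolution_exact :
    Function.Injective (phiMap k) ∧ Function.Surjective (psiMap k) ∧
      LinearMap.ker (psiMap k) = LinearMap.range (phiMap k) := by
  refine ⟨?_, ?_, ?_⟩
  · -- injectivity of φ
    rw [← LinearMap.ker_eq_bot, eq_bot_iff]
    intro r hr
    simp only [LinearMap.mem_ker] at hr
    obtain ⟨f, rfl⟩ := Ideal.Quotient.mk_surjective (I := I3 k) r
    have h0 : Ideal.Quotient.mk (I3 k) (f * X 1) = 0 := by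
      have := congrFun hr 0
      simpa [phiMap, yR, map_mul] using this
    have h1 : Ideal.Quotient.mk (I3 k) (f * X 0) = 0 := by
      have := congrFun hr 1
      simpa [phiMap, xR, map_mul] using this
    rw [Ideal.Quotient.eq_zero_iff_mem, Ideal.mem_span_singleton] at h0 h1
    have hX0 : (X 0 : S3 k) ∣ f :=
      (mul_dvd_mul_iff_right (MvPolynomial.X_ne_zero (1 : Fin 3))).mp h0
    have hX1 : (X 1 : S3 k) ∣ f := by
      rw [mul_comm (X 0 : S3 k) (X 1)] at h1
      exact (mul_dvd_mul_iff_right (MvPolynomial.X_ne_zero (0 : Fin 3))).mp h1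
    obtain ⟨g, rfl⟩ := hX0
    have hg : (X 1 : S3 k) ∣ g := by
      rcases (prime_X1 k).2.2 _ _ hX1 with h | h
      · rw [MvPolynomial.X_dvd_X] at h
        exact absurd h (by decide)
      · exact h
    obtain ⟨h, rfl⟩ := hg
    simp only [Submodule.mem_bot]
    rw [Ideal.Quotient.eq_zero_iff_mem, Ideal.mem_span_singleton]
    exact ⟨h, by ring⟩
  · -- surjectivity of ψ
    rw [← LinearMap.range_eq_top, ← top_le_iff,
      ← KaehlerDifferential.span_range_derivation, Submodule.span_le]
    rintro _ ⟨r, rfl⟩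
    obtain ⟨f, rfl⟩ := Ideal.Quotient.mk_surjective (I := I3 k) r
    induction f using MvPolynomial.induction_on with
    | C a =>
        have : (Ideal.Quotient.mk (I3 k) (C a) : SncLocalRing k)
            = algebraMap k (SncLocalRing k) a := by
          rw [IsScalarTower.algebraMap_apply k (S3 k) (SncLocalRing k),
            MvPolynomial.algebraMap_eq, Ideal.Quotient.algebraMap_eq]
        rw [this, Derivation.map_algebraMap]
        exact (LinearMap.range (psiMap k)).zero_mem
    | add p q hp hq =>
        rw [map_add, Derivation.map_add]
        exact add_mem hp hq
    | mul_X p i hp =>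
        rw [map_mul, Derivation.leibniz]
        refine add_mem (Submodule.smul_mem _ _ ?_) (Submodule.smul_mem _ _ hp)
        exact ⟨Pi.single i 1, (psi_single k i)⟩
  · -- kernel = image
    apply le_antisymm
    · intro a ha
      simp only [LinearMap.mem_ker] at ha
      have := congrFun (congrArg DFunLike.coe (Lmap_comp_psi k)) a
      simp only [LinearMap.comp_apply, ha, map_zero] at this
      have h2 : (LinearMap.range (phiMap k)).mkQ a = 0 := this.symm
      rwa [← Submodule.ker_mkQ (LinearMap.range (phiMap k)), LinearMap.mem_ker]
    · rintro _ ⟨r, rfl⟩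
      simp only [LinearMap.mem_ker]
      show ((psiMap k).comp (phiMap k)) r = 0
      rw [psi_comp_phi k, LinearMap.zero_apply]
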